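/- Let G be a connected graph on n vertices. Then PI_w(G) ≤ (8/27)n⁴, with equality if and only if 3 divides n and G is the complete balanced tripartite graph K_{n/3,n/3,n/3}. -/

import Mathlib

open Finset
open scoped Classical

/-- Number of vertices strictly closer to `u` than to `v`. -/
noncomputable def ncl {V : Type*} [Fintype V] (G : SimpleGraph V) (u v : V) : ℕ :=
  (Finset.univ.filter fun x => G.dist x u < G.dist x v).card

/-- Weighted vertex PI index: each edge `uv` contributes
`(deg u + deg v) * (n_u(e) + n_v(e))`; each edge is counted twice in the double sum. -/
noncomputable def PIw {V : Type*} [Fintype V] (G : SimpleGraph V) : ℝ :=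
  (∑ u, ∑ v, if G.Adj u v then
    (((G.degree u + G.degree v : ℕ) : ℝ) * ((ncl G u v + ncl G v u : ℕ) : ℝ)) else 0) / 2

section Aux

variable {V : Type*} [Fintype V] (G : SimpleGraph V)

private noncomputable def prs : Finset (V × V) :=
  Finset.univ.filter fun p : V × V => G.Adj p.1 p.2

private lemma mem_prs {p : V × V} : p ∈ prs G ↔ G.Adj p.1 p.2 := by
  simp [prs]

private lemma sum_prs {β : Type*} [AddCommMonoid β] (f : V → V → β) :
    ∑ p ∈ prs G, f p.1 p.2 = ∑ u, ∑ v, if G.Adj u v then f u v else 0 := by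
  rw [prs, Finset.sum_filter, ← Finset.univ_product_univ, Finset.sum_product]

private lemma sum_prs_fst (g : V → ℝ) :
    ∑ p ∈ prs G, g p.1 = ∑ u, g u * (G.degree u : ℝ) := by
  rw [sum_prs G (fun u _ => g u)]
  refine Finset.sum_congr rfl fun u _ => ?_
  have h1 : ∀ v, (if G.Adj u v then g u else 0) = g u * (if G.Adj u v then (1:ℝ) else 0) := by
    intro v; split <;> simp
  simp_rw [h1, ← Finset.mul_sum, Finset.sum_boole]
  congr 2
  rw [SimpleGraph.degree, SimpleGraph.neighborFinset_eq_filter]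

private lemma sum_prs_snd (g : V → ℝ) :
    ∑ p ∈ prs G, g p.2 = ∑ u, g u * (G.degree u : ℝ) := by
  rw [sum_prs G (fun _ v => g v), Finset.sum_comm]
  simp_rw [G.adj_comm]
  rw [← sum_prs G (fun u _ => g u)]
  exact sum_prs_fst G g

private lemma card_prs : (prs G).card = ∑ u, G.degree u := by
  rw [Finset.card_eq_sum_ones, sum_prs G (fun _ _ => 1)]
  refine Finset.sum_congr rfl fun u _ => ?_
  rw [Finset.sum_boole, SimpleGraph.degree, SimpleGraph.neighborFinset_eq_filter]
  simp

private lemma deg_add_deg_le (u v : V) :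
    G.degree u + G.degree v
      ≤ Fintype.card V + (G.neighborFinset u ∩ G.neighborFinset v).card := by
  have h1 := Finset.card_union_add_card_inter (G.neighborFinset u) (G.neighborFinset v)
  have h2 : (G.neighborFinset u ∪ G.neighborFinset v).card ≤ Fintype.card V :=
    Finset.card_le_univ _
  simp only [SimpleGraph.card_neighborFinset_eq_degree] at h1
  omega

private lemma ncl_add_ncl_le {u v : V} :
    ncl G u v + ncl G v u + (G.neighborFinset u ∩ G.neighborFinset v).card
      ≤ Fintype.card V := by
  classical
  set A := Finset.univ.filter fun x => G.dist x u < G.dist x v with hA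
  set B := Finset.univ.filter fun x => G.dist x v < G.dist x u with hB
  set C := G.neighborFinset u ∩ G.neighborFinset v with hC
  have hdC : ∀ x ∈ C, G.dist x u = 1 ∧ G.dist x v = 1 := by
    intro x hx
    rw [hC, Finset.mem_inter, SimpleGraph.mem_neighborFinset,
      SimpleGraph.mem_neighborFinset] at hx
    exact ⟨SimpleGraph.dist_eq_one_iff_adj.mpr hx.1.symm,
      SimpleGraph.dist_eq_one_iff_adj.mpr hx.2.symm⟩
  have hAB : Disjoint A B := by
    rw [Finset.disjoint_left]; intro x hxA hxB
    simp only [hA, hB, Finset.mem_filter] at hxA hxB; omega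
  have hAC : Disjoint A C := by
    rw [Finset.disjoint_left]; intro x hxA hxC
    obtain ⟨h1, h2⟩ := hdC x hxC
    simp only [hA, Finset.mem_filter] at hxA; omega
  have hBC : Disjoint B C := by
    rw [Finset.disjoint_left]; intro x hxB hxC
    obtain ⟨h1, h2⟩ := hdC x hxC
    simp only [hB, Finset.mem_filter] at hxB; omega
  have hcalc : ncl G u v + ncl G v u + C.card = (A ∪ B ∪ C).card := by
    rw [Finset.card_union_of_disjoint (Finset.disjoint_union_left.mpr ⟨hAC, hBC⟩),
      Finset.card_union_of_disjoint hAB]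
    rfl
  rw [hcalc]
  exact Finset.card_le_univ _

private lemma iso_of_props (k : ℕ) (hk : 0 < k) (hcard : Fintype.card V = 3 * k)
    (hdeg : ∀ v, G.degree v = 2 * k)
    (hu : ∀ u v, G.Adj u v → ∀ x, G.Adj u x ∨ G.Adj v x) :
    Nonempty (G ≃g SimpleGraph.completeMultipartiteGraph (fun _ : Fin 3 => Fin k)) := by
  classical
  have htrans : ∀ {a b c : V}, ¬G.Adj a b → ¬G.Adj b c → ¬G.Adj a c := by
    intro a b c hab hbc hac
    rcases hu a c hac b with h1 | h1
    · exact hab h1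
    · exact hbc h1.symm
  let s : Setoid V := ⟨fun a b => ¬G.Adj a b,
    ⟨fun a => G.loopless.irrefl a, fun h h2 => h h2.symm, fun h1 h2 => htrans h1 h2⟩⟩
  haveI : DecidableRel s.r := fun a b => Classical.dec _
  have hfib : ∀ q : Quotient s, Fintype.card {x // Quotient.mk s x = q} = k := by
    refine Quotient.ind (fun v => ?_)
    have he : ∀ x : V, (Quotient.mk s x = Quotient.mk s v) ↔ ¬ G.Adj x v := by
      intro x; exact Quotient.eq''
    rw [Fintype.card_congr (Equiv.subtypeEquivRight he)]
    rw [Fintype.card_subtype_compl]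
    have hadj : Fintype.card {x // G.Adj x v} = G.degree v := by
      rw [Fintype.card_subtype, SimpleGraph.degree, SimpleGraph.neighborFinset_eq_filter]
      congr 1
      ext x
      simp [G.adj_comm]
    rw [hadj, hcard, hdeg v]
    omega
  have hQ3 : Fintype.card (Quotient s) = 3 := by
    have h1 : Fintype.card V = Fintype.card (Σ q : Quotient s, {x // Quotient.mk s x = q}) :=
      Fintype.card_congr (Equiv.sigmaFiberEquiv (Quotient.mk s)).symm
    rw [Fintype.card_sigma] at h1
    simp_rw [hfib] at h1
    rw [Finset.sum_const, smul_eq_mul, hcard] at h1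
    exact Nat.eq_of_mul_eq_mul_right hk h1.symm
  let eQ : Quotient s ≃ Fin 3 := Fintype.equivFinOfCardEq hQ3
  let eF : ∀ q : Quotient s, {x // Quotient.mk s x = q} ≃ Fin k := fun q =>
    Fintype.equivFinOfCardEq (hfib q)
  let E : V ≃ Σ _ : Fin 3, Fin k :=
    (Equiv.sigmaFiberEquiv (Quotient.mk s)).symm.trans (Equiv.sigmaCongr eQ eF)
  have hE1 : ∀ v : V, (E v).1 = eQ (Quotient.mk s v) := fun v => rfl
  refine ⟨⟨E, ?_⟩⟩
  intro a b
  show (E a).1 ≠ (E b).1 ↔ G.Adj a b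
  rw [hE1, hE1]
  constructor
  · intro hne
    by_contra hadj
    exact hne (by rw [Quotient.sound (a := a) (b := b) hadj])
  · intro hadj hne
    have : Quotient.mk s a = Quotient.mk s b := eQ.injective hne
    exact (Quotient.eq''.mp this) hadj

private lemma props_of_iso {k : ℕ}
    (e : G ≃g SimpleGraph.completeMultipartiteGraph (fun _ : Fin 3 => Fin k)) :
    Fintype.card V = 3 * k ∧ (∀ v, G.degree v = 2 * k) ∧
    (∀ u v, G.Adj u v → ∀ x, G.Adj u x ∨ G.Adj v x) ∧
    (∀ x u, x ≠ u → ¬G.Adj x u → ∃ w, G.Adj x w ∧ G.Adj u w) := by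
  classical
  set K := SimpleGraph.completeMultipartiteGraph (fun _ : Fin 3 => Fin k) with hKdef
  have hK : ∀ a b : Σ _ : Fin 3, Fin k, K.Adj a b ↔ a.1 ≠ b.1 := fun a b => Iff.rfl
  have hmap : ∀ u v : V, G.Adj u v ↔ (e u).1 ≠ (e v).1 := by
    intro u v
    rw [← hK]
    exact (e.map_rel_iff).symm
  refine ⟨?_, ?_, ?_, ?_⟩
  · rw [Fintype.card_congr e.toEquiv, Fintype.card_sigma]
    simp [mul_comm]
  · intro v
    rw [← SimpleGraph.card_neighborSet_eq_degree, Fintype.card_congr (e.mapNeighborSet v)]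
    have h1 : Fintype.card (K.neighborSet (e v))
        = Fintype.card {b : Σ _ : Fin 3, Fin k // ¬ ((e v).1 = b.1)} := by
      refine Fintype.card_congr (Equiv.subtypeEquivRight ?_)
      intro b
      exact hK (e v) b
    have h2 : Fintype.card {b : Σ _ : Fin 3, Fin k // (e v).1 = b.1} = k := by
      have e2 : {b : Σ _ : Fin 3, Fin k // (e v).1 = b.1} ≃ Fin k :=
        { toFun := fun b => b.1.2
          invFun := fun x => ⟨⟨(e v).1, x⟩, rfl⟩
          left_inv := by rintro ⟨⟨j, x⟩, h⟩; cases h; rfl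
          right_inv := fun x => rfl }
      rw [Fintype.card_congr e2, Fintype.card_fin]
    rw [h1, Fintype.card_subtype_compl, h2, Fintype.card_sigma]
    simp
    omega
  · intro u v huv x
    rw [hmap] at huv ⊢
    rw [hmap]
    by_cases h1 : (e u).1 = (e x).1
    · right
      intro h2
      exact huv (h1.trans h2.symm)
    · left
      exact h1
  · intro x u hne hnadj
    have h1 : (e x).1 = (e u).1 := by
      by_contra h
      exact hnadj ((hmap x u).mpr h)
    have hf3 : ∀ j : Fin 3, j ≠ j + 1 := by decide
    have happ : e (e.symm ⟨(e x).1 + 1, (e x).2⟩) = ⟨(e x).1 + 1, (e x).2⟩ :=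
      e.apply_symm_apply _
    refine ⟨e.symm ⟨(e x).1 + 1, (e x).2⟩, ?_, ?_⟩
    · rw [hmap, happ]
      exact hf3 (e x).1
    · rw [hmap, happ]
      rw [← h1]
      exact hf3 (e x).1

private lemma dist_formula (hconn : G.Connected)
    (hc : ∀ x u, x ≠ u → ¬G.Adj x u → ∃ w, G.Adj x w ∧ G.Adj u w) (x u : V) :
    G.dist x u = if x = u then 0 else if G.Adj x u then 1 else 2 := by
  split_ifs with h1 h2
  · subst h1; exact SimpleGraph.dist_self
  · exact SimpleGraph.dist_eq_one_iff_adj.mpr h2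
  · obtain ⟨w, hxw, huw⟩ := hc x u h1 h2
    have hle : G.dist x u ≤ 2 := by
      have hp := SimpleGraph.dist_le
        (SimpleGraph.Walk.cons hxw (SimpleGraph.Walk.cons huw.symm SimpleGraph.Walk.nil))
      simpa using hp
    have h0 : G.dist x u ≠ 0 := by
      rw [Ne, hconn.dist_eq_zero_iff]; exact h1
    have hne1 : G.dist x u ≠ 1 := fun hh => h2 (SimpleGraph.dist_eq_one_iff_adj.mp hh)
    omega

private lemma ncl_filter (hconn : G.Connected)
    (hc : ∀ x u, x ≠ u → ¬G.Adj x u → ∃ w, G.Adj x w ∧ G.Adj u w) {u v : V} (h : G.Adj u v) :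
    (Finset.univ.filter fun x => G.dist x u < G.dist x v)
      = insert u ((G.neighborFinset u \ G.neighborFinset v).erase v) := by
  ext x
  rw [Finset.mem_filter, dist_formula G hconn hc x u, dist_formula G hconn hc x v,
    Finset.mem_insert, Finset.mem_erase, Finset.mem_sdiff,
    SimpleGraph.mem_neighborFinset, SimpleGraph.mem_neighborFinset]
  have hne := h.ne
  by_cases hxu : x = u <;> by_cases hxv : x = v <;>
    by_cases ha : G.Adj x u <;> by_cases hb : G.Adj x v <;>
    simp_all [G.adj_comm] <;> omega

private lemma ncl_val (hconn : G.Connected)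
    (hc : ∀ x u, x ≠ u → ¬G.Adj x u → ∃ w, G.Adj x w ∧ G.Adj u w) (k : ℕ)
    (hcard : Fintype.card V = 3 * k) (hdeg : ∀ v, G.degree v = 2 * k)
    (hu2 : ∀ u v, G.Adj u v → ∀ x, G.Adj u x ∨ G.Adj v x)
    {u v : V} (h : G.Adj u v) : ncl G u v = k := by
  have huni : G.neighborFinset u ∪ G.neighborFinset v = Finset.univ := by
    refine Finset.eq_univ_of_forall fun x => ?_
    rcases hu2 u v h x with h1 | h1
    · exact Finset.mem_union_left _ ((SimpleGraph.mem_neighborFinset G u x).mpr h1)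
    · exact Finset.mem_union_right _ ((SimpleGraph.mem_neighborFinset G v x).mpr h1)
  have hinter : (G.neighborFinset u ∩ G.neighborFinset v).card = k := by
    have h1 := Finset.card_union_add_card_inter (G.neighborFinset u) (G.neighborFinset v)
    rw [huni, Finset.card_univ, hcard] at h1
    simp only [SimpleGraph.card_neighborFinset_eq_degree, hdeg] at h1
    omega
  have hsd : (G.neighborFinset u \ G.neighborFinset v).card = k := by
    have h1 := Finset.card_inter_add_card_sdiff (G.neighborFinset u) (G.neighborFinset v)
    rw [hinter] at h1
    simp only [SimpleGraph.card_neighborFinset_eq_degree, hdeg] at h1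
    omega
  have hvmem : v ∈ (G.neighborFinset u \ G.neighborFinset v) := by
    rw [Finset.mem_sdiff, SimpleGraph.mem_neighborFinset, SimpleGraph.mem_neighborFinset]
    exact ⟨h, fun hh => G.loopless.irrefl v hh⟩
  have humem : u ∉ (G.neighborFinset u \ G.neighborFinset v).erase v := by
    intro hh
    have := (Finset.mem_erase.mp hh).2
    rw [Finset.mem_sdiff, SimpleGraph.mem_neighborFinset] at this
    exact G.loopless.irrefl u this.1
  rw [ncl, ncl_filter G hconn hc h, Finset.card_insert_of_notMem humem,
    Finset.card_erase_of_mem hvmem, hsd]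
  have hkpos : 0 < k := by
    by_contra hh
    have : k = 0 := by omega
    rw [this] at hsd
    rw [Finset.card_eq_zero] at hsd
    rw [hsd] at hvmem
    exact absurd hvmem (Finset.notMem_empty v)
  omega

private lemma piw_eq (hconn : G.Connected) (k : ℕ) (hcard : Fintype.card V = 3 * k)
    (hdeg : ∀ v, G.degree v = 2 * k)
    (hu2 : ∀ u v, G.Adj u v → ∀ x, G.Adj u x ∨ G.Adj v x)
    (hc : ∀ x u, x ≠ u → ¬G.Adj x u → ∃ w, G.Adj x w ∧ G.Adj u w) :
    PIw G = 8 / 27 * (Fintype.card V : ℝ) ^ 4 := by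
  have hsum : (∑ u, ∑ v, if G.Adj u v then
      (((G.degree u + G.degree v : ℕ) : ℝ) * ((ncl G u v + ncl G v u : ℕ) : ℝ)) else 0)
      = ∑ p ∈ prs G,
        (((G.degree p.1 + G.degree p.2 : ℕ) : ℝ) * ((ncl G p.1 p.2 + ncl G p.2 p.1 : ℕ) : ℝ)) :=
    (sum_prs G _).symm
  have hptv : ∀ p ∈ prs G,
      (((G.degree p.1 + G.degree p.2 : ℕ) : ℝ) * ((ncl G p.1 p.2 + ncl G p.2 p.1 : ℕ) : ℝ))
        = (8:ℝ) * (k:ℝ)^2 := by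
    intro p hp
    have hadj := (mem_prs G).mp hp
    rw [hdeg, hdeg, ncl_val G hconn hc k hcard hdeg hu2 hadj,
      ncl_val G hconn hc k hcard hdeg hu2 hadj.symm]
    push_cast
    ring
  have hM : (prs G).card = 6 * k^2 := by
    rw [card_prs]
    simp only [hdeg, Finset.sum_const, Finset.card_univ, hcard, smul_eq_mul]
    ring
  rw [PIw, hsum, Finset.sum_congr rfl hptv, Finset.sum_const, hM, hcard]
  push_cast
  ring

end Aux

set_option maxHeartbeats 1600000 in
theorem PIw_upper_bound_global {V : Type*} [Fintype V] (G : SimpleGraph V)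
    (hconn : G.Connected) :
    PIw G ≤ 8 / 27 * (Fintype.card V : ℝ) ^ 4 ∧
    (PIw G = 8 / 27 * (Fintype.card V : ℝ) ^ 4 ↔
      3 ∣ Fintype.card V ∧
      Nonempty (G ≃g SimpleGraph.completeMultipartiteGraph
        (fun _ : Fin 3 => Fin (Fintype.card V / 3)))) := by
  classical
  by_cases hn0 : Fintype.card V = 0
  · -- empty graph
    haveI : IsEmpty V := Fintype.card_eq_zero_iff.mp hn0
    have hPI : PIw G = 0 := by simp [PIw]
    have hdiv : Fintype.card V / 3 = 0 := by omega
    haveI : IsEmpty (Fin (Fintype.card V / 3)) := by rw [hdiv]; infer_instance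
    haveI : IsEmpty (Σ _ : Fin 3, Fin (Fintype.card V / 3)) := ⟨fun a => IsEmpty.false a.2⟩
    have iso : G ≃g SimpleGraph.completeMultipartiteGraph
        (fun _ : Fin 3 => Fin (Fintype.card V / 3)) :=
      { toEquiv := Equiv.equivOfIsEmpty _ _
        map_rel_iff' := fun {a b} => isEmptyElim a }
    refine ⟨by rw [hPI, hn0]; norm_num, ?_, ?_⟩
    · intro _
      exact ⟨by omega, ⟨iso⟩⟩
    · intro _
      rw [hPI, hn0]; norm_num
  -- main case
  obtain ⟨n, hn⟩ : ∃ n, Fintype.card V = n := ⟨_, rfl⟩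
  rw [hn]
  have hnpos : 0 < n := by omega
  have hnR : (0:ℝ) < (n:ℝ) := by exact_mod_cast hnpos
  have hn2pos : (0:ℝ) < (n:ℝ)^2 := by positivity
  -- notation
  have hPIdef : PIw G = (∑ p ∈ prs G,
      (((G.degree p.1 + G.degree p.2 : ℕ) : ℝ) * ((ncl G p.1 p.2 + ncl G p.2 p.1 : ℕ) : ℝ))) / 2 := by
    rw [PIw]
    congr 1
    exact (sum_prs G _).symm
  obtain ⟨M, hM⟩ : ∃ x : ℝ, x = (((prs G).card : ℕ) : ℝ) := ⟨_, rfl⟩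
  obtain ⟨D2, hD2⟩ : ∃ x : ℝ, x = ∑ v, ((G.degree v : ℝ))^2 := ⟨_, rfl⟩
  obtain ⟨C2, hC2⟩ : ∃ x : ℝ, x = ∑ p ∈ prs G,
    (((G.neighborFinset p.1 ∩ G.neighborFinset p.2).card : ℝ))^2 := ⟨_, rfl⟩
  obtain ⟨T, hT⟩ : ∃ x : ℝ, x = ∑ p ∈ prs G,
    (((G.neighborFinset p.1 ∩ G.neighborFinset p.2).card : ℝ)) := ⟨_, rfl⟩
  have hMnn : (0:ℝ) ≤ M := by rw [hM]; positivity
  have hTnn : (0:ℝ) ≤ T := by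
    rw [hT]; exact Finset.sum_nonneg fun p _ => by positivity
  have hC2nn : (0:ℝ) ≤ C2 := by
    rw [hC2]; exact Finset.sum_nonneg fun p _ => by positivity
  -- pointwise bound
  have hpt : ∀ p ∈ prs G,
      (((G.degree p.1 + G.degree p.2 : ℕ) : ℝ) * ((ncl G p.1 p.2 + ncl G p.2 p.1 : ℕ) : ℝ))
        ≤ (n:ℝ)^2 - (((G.neighborFinset p.1 ∩ G.neighborFinset p.2).card : ℝ))^2 := by
    intro p hp
    have h1 : ((G.degree p.1 + G.degree p.2 : ℕ) : ℝ)
        ≤ (n:ℝ) + ((G.neighborFinset p.1 ∩ G.neighborFinset p.2).card : ℝ) := by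
      have := deg_add_deg_le G p.1 p.2
      rw [hn] at this
      exact_mod_cast this
    have h2 : ((ncl G p.1 p.2 + ncl G p.2 p.1 : ℕ) : ℝ)
        ≤ (n:ℝ) - ((G.neighborFinset p.1 ∩ G.neighborFinset p.2).card : ℝ) := by
      have h2' := ncl_add_ncl_le G (u := p.1) (v := p.2)
      rw [hn] at h2'
      have : ((ncl G p.1 p.2 + ncl G p.2 p.1
          + (G.neighborFinset p.1 ∩ G.neighborFinset p.2).card : ℕ) : ℝ) ≤ (n:ℝ) := by
        exact_mod_cast h2'
      push_cast at this ⊢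
      linarith
    have hb1 : (0:ℝ) ≤ ((ncl G p.1 p.2 + ncl G p.2 p.1 : ℕ) : ℝ) := by positivity
    have hb2 : (0:ℝ) ≤ (n:ℝ) + ((G.neighborFinset p.1 ∩ G.neighborFinset p.2).card : ℝ) := by
      positivity
    nlinarith [mul_le_mul h1 h2 hb1 hb2]
  -- sum bound
  have hS1 : 2 * PIw G ≤ M * (n:ℝ)^2 - C2 := by
    have h1 := Finset.sum_le_sum hpt
    have h2 : ∑ _p ∈ prs G, (n:ℝ)^2 = M * (n:ℝ)^2 := by
      rw [Finset.sum_const, nsmul_eq_mul, hM]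
    have h3 : (∑ p ∈ prs G, ((n:ℝ)^2
        - (((G.neighborFinset p.1 ∩ G.neighborFinset p.2).card : ℝ))^2))
        = M * (n:ℝ)^2 - C2 := by
      rw [Finset.sum_sub_distrib, h2, hC2]
    rw [hPIdef]
    rw [h3] at h1
    linarith
  -- Cauchy-Schwarz for codegrees
  have hcs2 : T^2 ≤ M * C2 := by
    have := sq_sum_le_card_mul_sum_sq (s := prs G)
      (f := fun p => (((G.neighborFinset p.1 ∩ G.neighborFinset p.2).card : ℝ)))
    rw [hT, hM, hC2]
    exact_mod_cast this
  -- degree sums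
  have hMdeg : M = ∑ v, (G.degree v : ℝ) := by
    rw [hM, card_prs]
    push_cast
    rfl
  have hdd : ∑ p ∈ prs G, ((G.degree p.1 : ℝ) + (G.degree p.2 : ℝ)) = 2 * D2 := by
    rw [Finset.sum_add_distrib, sum_prs_fst G (fun v => (G.degree v : ℝ)),
      sum_prs_snd G (fun v => (G.degree v : ℝ)), hD2]
    rw [← Finset.sum_add_distrib]
    rw [Finset.mul_sum]
    refine Finset.sum_congr rfl fun v _ => by ring
  -- lower bound on T
  have hTlow : 2 * D2 - M * (n:ℝ) ≤ T := by
    have h1 : ∀ p ∈ prs G, (G.degree p.1 : ℝ) + (G.degree p.2 : ℝ) - (n:ℝ)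
        ≤ (((G.neighborFinset p.1 ∩ G.neighborFinset p.2).card : ℝ)) := by
      intro p _
      have := deg_add_deg_le G p.1 p.2
      rw [hn] at this
      have h2 : ((G.degree p.1 + G.degree p.2 : ℕ) : ℝ)
          ≤ (n:ℝ) + ((G.neighborFinset p.1 ∩ G.neighborFinset p.2).card : ℝ) := by
        exact_mod_cast this
      push_cast at h2
      linarith
    have h2 := Finset.sum_le_sum h1
    rw [Finset.sum_sub_distrib, hdd, Finset.sum_const, nsmul_eq_mul, ← hM, ← hT] at h2
    exact h2
  -- Cauchy-Schwarz for degrees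
  have hcs1 : M^2 ≤ (n:ℝ) * D2 := by
    have := sq_sum_le_card_mul_sum_sq (s := (Finset.univ : Finset V))
      (f := fun v => (G.degree v : ℝ))
    rw [Finset.card_univ, hn] at this
    rw [hMdeg, hD2]
    exact_mod_cast this
  by_cases hbig : (n:ℝ)^2 ≤ 2*M
  · -- large case
    have hMpos : (0:ℝ) < M := by linarith
    have h2Mn : (0:ℝ) ≤ 2*M - (n:ℝ)^2 := by linarith
    have hTlow2 : M*(2*M-(n:ℝ)^2) ≤ T * (n:ℝ) := by
      have h1 : M*(2*M-(n:ℝ)^2) ≤ (2*D2 - M*(n:ℝ)) * (n:ℝ) := by linarith [hcs1]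
      have h2 : (2*D2 - M*(n:ℝ)) * (n:ℝ) ≤ T * (n:ℝ) :=
        mul_le_mul_of_nonneg_right hTlow (le_of_lt hnR)
      linarith
    have hBnn : (0:ℝ) ≤ M*(2*M-(n:ℝ)^2) := mul_nonneg hMnn h2Mn
    have hTn_nn : (0:ℝ) ≤ T * (n:ℝ) := mul_nonneg hTnn (le_of_lt hnR)
    have key1 : M*(2*M-(n:ℝ)^2)^2 ≤ C2 * (n:ℝ)^2 := by
      have h1 : (M*(2*M-(n:ℝ)^2))^2 ≤ (T*(n:ℝ))^2 := pow_le_pow_left₀ hBnn hTlow2 2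
      have h2 : (T*(n:ℝ))^2 ≤ M * C2 * (n:ℝ)^2 := by
        have h2' := mul_le_mul_of_nonneg_right hcs2 (le_of_lt hn2pos)
        linarith [h2']
      have h3 : M * (M*(2*M-(n:ℝ)^2)^2) ≤ M * (C2*(n:ℝ)^2) := by linarith [h1, h2]
      exact le_of_mul_le_mul_left h3 hMpos
    have key2 : 2 * PIw G * (n:ℝ)^2 ≤ 4*M^2*((n:ℝ)^2 - M) := by
      have h1 : 2 * PIw G * (n:ℝ)^2 ≤ (M*(n:ℝ)^2 - C2) * (n:ℝ)^2 :=
        mul_le_mul_of_nonneg_right hS1 (le_of_lt hn2pos)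
      linarith [key1, h1]
    have key3 : 27*(4*M^2*((n:ℝ)^2 - M)) ≤ 16*(n:ℝ)^6 := by
      linarith [mul_nonneg (sq_nonneg (3*M - 2*(n:ℝ)^2))
        (by linarith : (0:ℝ) ≤ 3*M + (n:ℝ)^2)]
    have part1 : PIw G ≤ 8/27*(n:ℝ)^4 := by
      rw [← mul_le_mul_iff_of_pos_right hn2pos]
      linarith [key2, key3]
    refine ⟨part1, ?_, ?_⟩
    · -- equality implies structure
      intro heq
      have heqn : 2 * PIw G * (n:ℝ)^2 = 16/27*(n:ℝ)^6 := by rw [heq]; ring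
      have e3 : 4*M^2*((n:ℝ)^2 - M) = 16/27*(n:ℝ)^6 := by linarith [key2, key3]
      have h3M : 3*M = 2*(n:ℝ)^2 := by
        have hfac : (3*M - 2*(n:ℝ)^2)^2 * (3*M + (n:ℝ)^2) = 0 := by
          linear_combination (-(27:ℝ)/4) * e3
        rcases mul_eq_zero.mp hfac with h | h
        · have h5 := pow_eq_zero_iff (n := 2) (by norm_num) |>.mp h
          linarith [sub_eq_zero.mp h5]
        · linarith [hMnn, hn2pos]
      have hS1n : 2*PIw G*(n:ℝ)^2 ≤ (M*(n:ℝ)^2 - C2)*(n:ℝ)^2 :=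
        mul_le_mul_of_nonneg_right hS1 (le_of_lt hn2pos)
      have mid1 : (M*(n:ℝ)^2 - C2)*(n:ℝ)^2 ≤ M*(n:ℝ)^4 - M*(2*M-(n:ℝ)^2)^2 := by
        linarith [key1]
      have mid2 : M*(n:ℝ)^4 - M*(2*M-(n:ℝ)^2)^2 = 4*M^2*((n:ℝ)^2-M) := by ring
      have e2 : C2*(n:ℝ)^2 = M*(2*M-(n:ℝ)^2)^2 := by linarith [hS1n, mid1, heqn, e3, mid2]
      have hTup : (T*(n:ℝ))^2 ≤ (M*(2*M-(n:ℝ)^2))^2 := by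
        have h2 := mul_le_mul_of_nonneg_right hcs2 (le_of_lt hn2pos)
        have h9 : M*(C2*(n:ℝ)^2) = M*(M*(2*M-(n:ℝ)^2)^2) := by rw [e2]
        linarith [h2, h9]
      have hTn : T*(n:ℝ) = M*(2*M-(n:ℝ)^2) := by
        have hle : T*(n:ℝ) ≤ M*(2*M-(n:ℝ)^2) :=
          (pow_le_pow_iff_left₀ hTn_nn hBnn two_ne_zero).mp hTup
        exact le_antisymm hle hTlow2
      have hD2n : D2 * (n:ℝ) = M^2 := by
        have h1 : (2*D2 - M*(n:ℝ))*(n:ℝ) ≤ T*(n:ℝ) :=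
          mul_le_mul_of_nonneg_right hTlow (le_of_lt hnR)
        have h2 : M*(2*M-(n:ℝ)^2) ≤ (2*D2 - M*(n:ℝ))*(n:ℝ) := by linarith [hcs1]
        linarith [h1, h2, hTn]
      have hTsum : T = 2*D2 - M*(n:ℝ) := by
        have h1 : T*(n:ℝ) = (2*D2 - M*(n:ℝ))*(n:ℝ) := by linarith [hTn, hD2n]
        exact mul_right_cancel₀ (ne_of_gt hnR) h1
      have hsump : ∑ p ∈ prs G, ((G.degree p.1:ℝ) + (G.degree p.2:ℝ) - (n:ℝ))
          = 2*D2 - M*(n:ℝ) := by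
        rw [Finset.sum_sub_distrib, hdd, Finset.sum_const, nsmul_eq_mul, ← hM]
      have hptc : ∀ p ∈ prs G, (((G.neighborFinset p.1 ∩ G.neighborFinset p.2).card : ℝ))
          = (G.degree p.1:ℝ) + (G.degree p.2:ℝ) - (n:ℝ) := by
        have hzero : ∑ p ∈ prs G, ((((G.neighborFinset p.1 ∩ G.neighborFinset p.2).card : ℝ))
            - ((G.degree p.1:ℝ) + (G.degree p.2:ℝ) - (n:ℝ))) = 0 := by
          rw [Finset.sum_sub_distrib, ← hT, hsump, hTsum]
          ring
        have hnonneg : ∀ p ∈ prs G,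
            (0:ℝ) ≤ (((G.neighborFinset p.1 ∩ G.neighborFinset p.2).card : ℝ))
              - ((G.degree p.1:ℝ) + (G.degree p.2:ℝ) - (n:ℝ)) := by
          intro p _
          have h0 := deg_add_deg_le G p.1 p.2
          rw [hn] at h0
          have h2 : ((G.degree p.1 + G.degree p.2 : ℕ) : ℝ)
              ≤ (n:ℝ) + ((G.neighborFinset p.1 ∩ G.neighborFinset p.2).card : ℝ) := by
            exact_mod_cast h0
          push_cast at h2
          linarith
        intro p hp
        have h5 := (Finset.sum_eq_zero_iff_of_nonneg hnonneg).mp hzero p hp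
        linarith
      have hreg : ∀ v, (G.degree v : ℝ) * (n:ℝ) = M := by
        have hzero : ∑ v, ((G.degree v:ℝ)*(n:ℝ) - M)^2 = 0 := by
          have h1 : ∀ v : V, ((G.degree v:ℝ)*(n:ℝ) - M)^2
              = (n:ℝ)^2*((G.degree v:ℝ))^2 - 2*(n:ℝ)*M*(G.degree v:ℝ) + M^2 := fun v => by ring
          rw [Finset.sum_congr rfl (fun v _ => h1 v), Finset.sum_add_distrib,
            Finset.sum_sub_distrib, ← Finset.mul_sum, ← Finset.mul_sum,
            Finset.sum_const, Finset.card_univ, hn, nsmul_eq_mul, ← hD2, ← hMdeg]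
          linear_combination (n:ℝ) * hD2n
        intro v
        have h2 := (Finset.sum_eq_zero_iff_of_nonneg
          (fun v _ => sq_nonneg _)).mp hzero v (Finset.mem_univ v)
        have h3 := pow_eq_zero_iff (n := 2) (by norm_num) |>.mp h2
        linarith [sub_eq_zero.mp h3]
      have h3Mnat : 3 * (prs G).card = 2 * n^2 := by
        have h1 := h3M
        rw [hM] at h1
        exact_mod_cast h1
      have hdvd : 3 ∣ n := by
        have h1 : 3 ∣ 2 * n^2 := ⟨(prs G).card, h3Mnat.symm⟩
        have h2 : (3:ℕ).Prime := by norm_num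
        rcases (Nat.Prime.dvd_mul h2).mp h1 with h | h
        · omega
        · exact h2.dvd_of_dvd_pow h
      set k := n / 3 with hk
      have hk3 : n = 3 * k := by omega
      have hkpos : 0 < k := by omega
      have hnk : (n:ℝ) = 3*(k:ℝ) := by exact_mod_cast hk3
      have hkR : (0:ℝ) < (k:ℝ) := by exact_mod_cast hkpos
      have hM6 : M = 6*(k:ℝ)^2 := by
        linear_combination (1/3:ℝ)*h3M + (2/3:ℝ)*((n:ℝ)+3*(k:ℝ))*hnk
      have hdegnat : ∀ v, G.degree v = 2*k := by
        intro v
        have h1 := hreg v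
        have h2 : ((G.degree v:ℝ) - 2*(k:ℝ)) * (3*(k:ℝ)) = 0 := by
          linear_combination h1 - (G.degree v:ℝ) * hnk + hM6
        rcases mul_eq_zero.mp h2 with h | h
        · have h4 : (G.degree v:ℝ) = ((2*k : ℕ):ℝ) := by push_cast; linarith [sub_eq_zero.mp h]
          exact_mod_cast h4
        · exfalso; linarith [hkR]
      have hu2 : ∀ u v, G.Adj u v → ∀ x, G.Adj u x ∨ G.Adj v x := by
        intro u v huv x
        have hp : (u, v) ∈ prs G := (mem_prs G).mpr huv
        have h1 := hptc (u, v) hp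
        have h2 : ((G.neighborFinset u ∩ G.neighborFinset v).card : ℝ) + (n:ℝ)
            = (G.degree u:ℝ) + (G.degree v:ℝ) := by
          simpa using by linarith [h1]
        have h3 : (G.neighborFinset u ∩ G.neighborFinset v).card + n
            = G.degree u + G.degree v := by exact_mod_cast h2
        have h4 := Finset.card_union_add_card_inter (G.neighborFinset u) (G.neighborFinset v)
        simp only [SimpleGraph.card_neighborFinset_eq_degree] at h4
        have h5 : (G.neighborFinset u ∪ G.neighborFinset v).card = n := by omega
        have h6 : G.neighborFinset u ∪ G.neighborFinset v = Finset.univ :=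
          Finset.eq_univ_of_card _ (by rw [h5]; exact hn.symm)
        have h7 : x ∈ G.neighborFinset u ∪ G.neighborFinset v := h6 ▸ Finset.mem_univ x
        rcases Finset.mem_union.mp h7 with h | h
        · exact Or.inl ((SimpleGraph.mem_neighborFinset G u x).mp h)
        · exact Or.inr ((SimpleGraph.mem_neighborFinset G v x).mp h)
      have hcard3 : Fintype.card V = 3 * k := by rw [hn]; exact hk3
      obtain ⟨iso⟩ := iso_of_props G k hkpos hcard3 hdegnat hu2
      exact ⟨hdvd, ⟨iso⟩⟩
    · -- structure implies equality
      rintro ⟨hdvd, ⟨e⟩⟩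
      obtain ⟨hcard3, hdeg3, hu3, hc3⟩ := props_of_iso G e
      have hres := piw_eq G hconn _ hcard3 hdeg3 hu3 hc3
      rw [hn] at hres
      exact hres
  · -- small case: strict inequality
    have hsmall : 2*M < (n:ℝ)^2 := by linarith [not_le.mp hbig]
    have hstrict : PIw G < 8/27*(n:ℝ)^4 := by
      have h1 : 2*PIw G ≤ M*(n:ℝ)^2 := by linarith [hS1, hC2nn]
      linarith [h1, mul_lt_mul_of_pos_right hsmall hn2pos, mul_pos hn2pos hn2pos]
    refine ⟨le_of_lt hstrict, ?_, ?_⟩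
    · intro heq
      exact absurd heq (ne_of_lt hstrict)
    · rintro ⟨hdvd, ⟨e⟩⟩
      obtain ⟨hcard3, hdeg3, hu3, hc3⟩ := props_of_iso G e
      have hres := piw_eq G hconn _ hcard3 hdeg3 hu3 hc3
      rw [hn] at hres
      exact hres
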